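/- Let d ≥ 3 be odd, let x_1, …, x_d be binary variables taking values in {0,1} (regarded as integers), and let k = ⌊(d−1)/2⌋. Define S_1 = ∑_{j=1}^d x_j, S_2 = ∑_{1 ≤ i < j ≤ d} x_i x_j, and for w = (w_1,…,w_k) ∈ {0,1}^k define W_1 = ∑_{j=1}^k w_j and W_2 = ∑_{j=1}^k (4j−1) w_j. Then ∏_{j=1}^d x_j = S_2 + min_{w ∈ {0,1}^k} (W_2 − 2·W_1·S_1 + w_k·(S_1 − d + 1)). -/

import Mathlib

private lemma keyL (k : ℕ) (n : ℤ) (hn : 0 ≤ n) :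
    2 * ∑ j ∈ Finset.range k, min 0 (4 * ((j : ℤ) + 1) - 1 - 2 * n) =
      if n ≤ 2 * k then -(n * (n - 1)) else 2 * k * (2 * k + 1 - 2 * n) := by
  induction k with
  | zero =>
    simp only [Finset.range_zero, Finset.sum_empty, mul_zero, Nat.cast_zero]
    split_ifs with h
    · have : n = 0 := le_antisymm (by omega) hn
      subst this; ring
    · ring
  | succ k ih =>
    rw [Finset.sum_range_succ, mul_add]
    rcases le_or_gt n (2 * k) with h | h
    · rw [if_pos (by push_cast; omega)] at ih
      rw [if_pos (by push_cast; omega)]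
      have h1 : min 0 (4 * ((k : ℤ) + 1) - 1 - 2 * n) = 0 := by omega
      rw [h1]; linarith [ih]
    · rcases eq_or_lt_of_le (Int.add_one_le_of_lt h) with h2 | h2
      · rw [if_neg (by omega)] at ih
        rw [if_pos (by push_cast; omega)]
        have h1 : min 0 (4 * ((k : ℤ) + 1) - 1 - 2 * n) = 0 := by omega
        rw [h1]
        have hn' : n = 2 * k + 1 := by omega
        subst hn'
        linear_combination ih
      · rcases eq_or_lt_of_le (Int.add_one_le_of_lt h2) with h3 | h3
        · rw [if_neg (by omega)] at ih
          rw [if_pos (by push_cast; omega)]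
          have h1 : min 0 (4 * ((k : ℤ) + 1) - 1 - 2 * n) = -1 := by omega
          rw [h1]
          have hn' : n = 2 * k + 2 := by omega
          subst hn'
          linear_combination ih
        · rw [if_neg (by omega)] at ih
          rw [if_neg (by push_cast; omega)]
          have h1 : min 0 (4 * ((k : ℤ) + 1) - 1 - 2 * n) = 4 * ((k : ℤ) + 1) - 1 - 2 * n := by
            omega
          rw [h1]
          push_cast
          linear_combination ih

private lemma s2L (d : ℕ) (x : Fin d → ℤ) (hx : ∀ j, x j = 0 ∨ x j = 1) :
    2 * (∑ p ∈ Finset.univ.filter (fun p : Fin d × Fin d => p.1 < p.2), x p.1 * x p.2) =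
      (∑ j, x j) * ((∑ j, x j) - 1) := by
  have hsq : (∑ j, x j) * (∑ j, x j) =
      ∑ p : Fin d × Fin d, x p.1 * x p.2 := by
    rw [Finset.sum_mul_sum]
    rw [← Finset.univ_product_univ, Finset.sum_product]
  have hsplit : (∑ p : Fin d × Fin d, x p.1 * x p.2) =
      (∑ p ∈ Finset.univ.filter (fun p : Fin d × Fin d => p.1 < p.2), x p.1 * x p.2) +
      (∑ p ∈ Finset.univ.filter (fun p : Fin d × Fin d => p.2 < p.1), x p.1 * x p.2) +
      (∑ p ∈ Finset.univ.filter (fun p : Fin d × Fin d => p.1 = p.2), x p.1 * x p.2) := by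
    rw [add_assoc,
      ← Finset.sum_filter_add_sum_filter_not Finset.univ (fun p : Fin d × Fin d => p.1 < p.2)]
    congr 1
    rw [← Finset.sum_filter_add_sum_filter_not
      (Finset.univ.filter (fun p : Fin d × Fin d => ¬ p.1 < p.2))
      (fun p : Fin d × Fin d => p.2 < p.1)]
    congr 1 <;> rw [Finset.filter_filter] <;> apply Finset.sum_congr _ (fun _ _ => rfl) <;>
      · apply Finset.filter_congr
        intro p _
        simp only [lt_iff_not_ge]
        constructor
        · intro h; omega
        · intro h; omega
  have hswap : (∑ p ∈ Finset.univ.filter (fun p : Fin d × Fin d => p.2 < p.1), x p.1 * x p.2) =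
      (∑ p ∈ Finset.univ.filter (fun p : Fin d × Fin d => p.1 < p.2), x p.1 * x p.2) := by
    apply Finset.sum_nbij' (fun p => Prod.swap p) (fun p => Prod.swap p)
    · intro p hp
      simp only [Finset.mem_filter, Finset.mem_univ, true_and] at hp ⊢
      exact hp
    · intro p hp
      simp only [Finset.mem_filter, Finset.mem_univ, true_and] at hp ⊢
      exact hp
    · intro p _; rfl
    · intro p _; rfl
    · intro p _
      exact mul_comm _ _
  have hdiag : (∑ p ∈ Finset.univ.filter (fun p : Fin d × Fin d => p.1 = p.2), x p.1 * x p.2) =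
      ∑ j, x j := by
    rw [show Finset.univ.filter (fun p : Fin d × Fin d => p.1 = p.2) = Finset.univ.diag from by
      ext p; simp [Finset.mem_diag]]
    rw [Finset.sum_diag]
    apply Finset.sum_congr rfl
    intro j _
    rcases hx j with h | h <;> rw [h] <;> ring
  rw [hswap, hdiag] at hsplit
  rw [hsplit] at hsq
  linarith [hsq]

theorem ishikawa_odd (d k : ℕ) (hd : 3 ≤ d) (hdodd : Odd d) (hk : k = (d - 1) / 2)
    (x : Fin d → ℤ) (hx : ∀ j, x j = 0 ∨ x j = 1) :
    (∏ j, x j) =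
      (∑ p ∈ Finset.univ.filter (fun p : Fin d × Fin d => p.1 < p.2), x p.1 * x p.2) +
      Finset.univ.inf' Finset.univ_nonempty
        (fun w : Fin k → Fin 2 =>
          (∑ j : Fin k, (4 * ((j.1 : ℤ) + 1) - 1) * ((w j).1 : ℤ)) -
            2 * (∑ j : Fin k, ((w j).1 : ℤ)) * (∑ j, x j) +
            ((w ⟨k - 1, by omega⟩).1 : ℤ) * ((∑ j, x j) - (d : ℤ) + 1)) := by
  obtain ⟨m, hm⟩ := hdodd
  have hd2 : d = 2 * k + 1 := by omega
  have hk1 : 1 ≤ k := by omega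
  set S : ℤ := ∑ j, x j with hS
  have hS0 : 0 ≤ S := Finset.sum_nonneg (fun j _ => by rcases hx j with h | h <;> omega)
  have hSd : S ≤ (d : ℤ) := by
    calc S ≤ ∑ _j : Fin d, (1 : ℤ) :=
          Finset.sum_le_sum (fun j _ => by rcases hx j with h | h <;> omega)
    _ = d := by simp
  -- product value
  have hprod : (∏ j, x j) = if S = (d : ℤ) then 1 else 0 := by
    by_cases hall : ∀ j, x j = 1
    · rw [if_pos]
      · exact Finset.prod_eq_one (fun j _ => hall j)
      · rw [hS]
        calc (∑ j, x j) = ∑ _j : Fin d, (1 : ℤ) := Finset.sum_congr rfl (fun j _ => hall j)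
        _ = d := by simp
    · push_neg at hall
      obtain ⟨j, hj⟩ := hall
      have hj0 : x j = 0 := by rcases hx j with h | h; exact h; exact absurd h hj
      rw [if_neg]
      · exact Finset.prod_eq_zero (Finset.mem_univ j) hj0
      · have : S < (d : ℤ) := by
          calc S < ∑ _j : Fin d, (1 : ℤ) := by
                apply Finset.sum_lt_sum (fun i _ => by rcases hx i with h | h <;> omega)
                exact ⟨j, Finset.mem_univ j, by omega⟩
          _ = d := by simp
        omega
  clear_value S
  -- setup
  set last : Fin k := ⟨k - 1, by omega⟩ with hlastdef
  clear_value last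
  have hlastv : ((last.1 : ℤ)) = (k : ℤ) - 1 := by
    simp only [hlastdef]
    omega
  set c : Fin k → ℤ := fun j => 4 * ((j.1 : ℤ) + 1) - 1 - 2 * S with hc
  clear_value c
  set coeff : Fin k → ℤ :=
    fun j => c j + (if j = last then S - (d : ℤ) + 1 else 0) with hcoeff
  clear_value coeff
  -- rewrite the objective
  have hf : ∀ w : Fin k → Fin 2,
      (∑ j : Fin k, (4 * ((j.1 : ℤ) + 1) - 1) * ((w j).1 : ℤ)) -
        2 * (∑ j : Fin k, ((w j).1 : ℤ)) * S +
        ((w last).1 : ℤ) * (S - (d : ℤ) + 1) =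
      ∑ j, coeff j * ((w j).1 : ℤ) := by
    intro w
    have h1 : ∀ j : Fin k, coeff j * ((w j).1 : ℤ) =
        (4 * ((j.1 : ℤ) + 1) - 1) * ((w j).1 : ℤ) - 2 * S * ((w j).1 : ℤ) +
          (if j = last then (S - (d : ℤ) + 1) * ((w j).1 : ℤ) else 0) := by
      intro j
      simp only [hcoeff, hc]
      split_ifs <;> ring
    rw [Finset.sum_congr rfl (fun j _ => h1 j)]
    rw [Finset.sum_add_distrib, Finset.sum_sub_distrib, Finset.sum_ite_eq' Finset.univ last]
    have h2 : ∑ j : Fin k, 2 * S * ((w j).1 : ℤ) = 2 * S * (∑ j : Fin k, ((w j).1 : ℤ)) :=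
      (Finset.mul_sum _ _ _).symm
    rw [h2]
    simp only [Finset.mem_univ, if_true]
    ring
  set T : ℤ := ∑ j : Fin k, min 0 (coeff j) with hT
  clear_value T
  -- the inf equals T
  have hinf : Finset.univ.inf' Finset.univ_nonempty
      (fun w : Fin k → Fin 2 =>
        (∑ j : Fin k, (4 * ((j.1 : ℤ) + 1) - 1) * ((w j).1 : ℤ)) -
          2 * (∑ j : Fin k, ((w j).1 : ℤ)) * S +
          ((w last).1 : ℤ) * (S - (d : ℤ) + 1)) = T := by
    apply le_antisymm
    · set wopt : Fin k → Fin 2 := fun j => if coeff j < 0 then 1 else 0 with hwopt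
      have hval : (∑ j : Fin k, (4 * ((j.1 : ℤ) + 1) - 1) * ((wopt j).1 : ℤ)) -
          2 * (∑ j : Fin k, ((wopt j).1 : ℤ)) * S +
          ((wopt last).1 : ℤ) * (S - (d : ℤ) + 1) = T := by
        rw [hf wopt, hT]
        apply Finset.sum_congr rfl
        intro j _
        by_cases h : coeff j < 0 <;> simp only [hwopt, h, if_true, if_false,
          Fin.val_one, Fin.val_zero, Nat.cast_one, Nat.cast_zero, mul_one, mul_zero] <;> omega
      exact hval ▸ Finset.inf'_le _ (Finset.mem_univ wopt)
    · apply Finset.le_inf'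
      intro w _
      rw [hf w, hT]
      apply Finset.sum_le_sum
      intro j _
      have hwj : ((w j).1 : ℤ) = 0 ∨ ((w j).1 : ℤ) = 1 := by
        have := (w j).isLt
        omega
      rcases hwj with h | h <;> rw [h] <;> omega
  -- compute T
  have hcsum : 2 * (∑ j : Fin k, min 0 (c j)) = -(S * (S - 1)) := by
    have : (∑ j : Fin k, min 0 (c j)) =
        ∑ j ∈ Finset.range k, min 0 (4 * ((j : ℤ) + 1) - 1 - 2 * S) := by
      simp only [hc]
      rw [Fin.sum_univ_eq_sum_range (fun j => min 0 (4 * ((j : ℤ) + 1) - 1 - 2 * S))]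
    rw [this, keyL k S hS0]
    split_ifs with h
    · rfl
    · have hS' : S = 2 * (k : ℤ) + 1 := by clear hT hf hinf; omega
      rw [hS']; ring
  have hTsplit : T = (∑ j : Fin k, min 0 (c j)) - min 0 (c last) + min 0 (coeff last) := by
    rw [hT, ← Finset.sum_erase_add _ _ (Finset.mem_univ last),
      ← Finset.sum_erase_add _ (fun j => min 0 (c j)) (Finset.mem_univ last)]
    have : ∀ j ∈ Finset.univ.erase last, min 0 (coeff j) = min 0 (c j) := by
      intro j hj
      have hne : j ≠ last := (Finset.mem_erase.mp hj).1
      simp only [hcoeff, hne, if_false, add_zero]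
    rw [Finset.sum_congr rfl this]
    ring
  have hclast : c last = 4 * (k : ℤ) - 1 - 2 * S := by
    simp only [hc, hlastv]; ring
  have hcoefflast : coeff last = 2 * (k : ℤ) - 1 - S := by
    simp only [hcoeff, if_true, eq_self_iff_true, hclast]
    have : (d : ℤ) = 2 * (k : ℤ) + 1 := by clear hT hf hinf hcsum hTsplit; omega
    rw [this]; ring
  -- final arithmetic
  rw [hprod, hinf]
  have h2S2 := s2L d x hx
  rw [← hS] at h2S2
  have hgoal : 2 * (if S = (d : ℤ) then 1 else 0) =
      2 * (∑ p ∈ Finset.univ.filter (fun p : Fin d × Fin d => p.1 < p.2), x p.1 * x p.2) +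
      2 * T := by
    have hT2 : 2 * T = -(S * (S - 1)) - 2 * min 0 (4 * (k : ℤ) - 1 - 2 * S) +
        2 * min 0 (2 * (k : ℤ) - 1 - S) := by
      rw [hTsplit, hclast, hcoefflast]
      linarith [hcsum]
    rw [h2S2, hT2]
    by_cases h : S = (d : ℤ)
    · rw [if_pos h]
      have h1 : min 0 (4 * (k : ℤ) - 1 - 2 * S) = -3 := by
        clear hT hf hinf hcsum hTsplit hT2; omega
      have h2 : min 0 (2 * (k : ℤ) - 1 - S) = -2 := by
        clear hT hf hinf hcsum hTsplit hT2; omega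
      rw [h1, h2]; ring
    · rw [if_neg h]
      have h3 : -2 * min 0 (4 * (k : ℤ) - 1 - 2 * S) + 2 * min 0 (2 * (k : ℤ) - 1 - S) = 0 := by
        clear hT hf hinf hcsum hTsplit hT2; omega
      linarith [h3]
  split_ifs at hgoal ⊢ <;> linarith [hgoal]
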